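/- Let A, B ∈ Mₙ(ℂ) with n ≥ 2. Then ℂA = ℂB (i.e., A and B are scalar multiples of each other, including both zero) if and only if for every rank-one matrix R = x y*, one has x* A y = 0 ⟺ x* B y = 0. -/

import Mathlib

open Matrix

/-- The operator (spectral) norm of a complex matrix, induced by the Euclidean norm on `ℂⁿ`. -/
noncomputable def opNorm {n : ℕ} (A : Matrix (Fin n) (Fin n) ℂ) : ℝ :=
  ‖Matrix.toEuclideanCLM (𝕜 := ℂ) (n := Fin n) A‖

/-- Birkhoff–James orthogonality of matrices with respect to the operator norm. -/
def BJ {n : ℕ} (A B : Matrix (Fin n) (Fin n) ℂ) : Prop :=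
  ∀ c : ℂ, opNorm A ≤ opNorm (A + c • B)

open scoped ComplexOrder in
/-- Two vectors whose dot-product functionals have the same kernel are proportional. -/
lemma functional_prop {n : ℕ} (u v : Fin n → ℂ)
    (h : ∀ y : Fin n → ℂ, u ⬝ᵥ y = 0 ↔ v ⬝ᵥ y = 0) : ∃ c : ℂ, v = c • u := by
  by_cases hu : u = 0
  · refine ⟨0, ?_⟩
    have hv : ∀ y, v ⬝ᵥ y = 0 := fun y => (h y).mp (by simp [hu])
    funext j
    have := hv (Pi.single j 1)
    simpa [dotProduct_single] using this
  · have hd : u ⬝ᵥ star u ≠ 0 := by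
      rw [dotProduct_comm]
      exact fun h0 => hu (dotProduct_star_self_eq_zero.mp h0)
    set d : ℂ := u ⬝ᵥ star u with hdd
    refine ⟨(v ⬝ᵥ star u) / d, ?_⟩
    have key : ∀ y : Fin n → ℂ, v ⬝ᵥ y = (v ⬝ᵥ star u) / d * (u ⬝ᵥ y) := by
      intro y
      set t : ℂ := (u ⬝ᵥ y) / d with htt
      have h1 : u ⬝ᵥ (y - t • star u) = 0 := by
        rw [dotProduct_sub, dotProduct_smul]
        rw [htt, smul_eq_mul]
        exact sub_eq_zero.mpr (div_mul_cancel₀ _ hd).symm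
      have h2 : v ⬝ᵥ (y - t • star u) = 0 := (h _).mp h1
      rw [dotProduct_sub, dotProduct_smul, sub_eq_zero] at h2
      rw [h2, htt]
      rw [smul_eq_mul]
      ring
    funext j
    have := key (Pi.single j 1)
    simpa [dotProduct_single] using this

/-- If `g u` is always a scalar multiple of `f u`, the scalar can be chosen uniformly. -/
lemma pencil_prop {n : ℕ} (f g : (Fin n → ℂ) →ₗ[ℂ] (Fin n → ℂ))
    (H : ∀ u, ∃ c : ℂ, g u = c • f u) : ∃ c : ℂ, ∀ u, g u = c • f u := by
  by_cases hf : ∃ u₀, f u₀ ≠ 0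
  · obtain ⟨u₀, hu₀⟩ := hf
    obtain ⟨c₀, hc₀⟩ := H u₀
    refine ⟨c₀, fun u => ?_⟩
    by_cases h0 : f u = 0
    · obtain ⟨c, hc⟩ := H u
      rw [hc, h0, smul_zero, smul_zero]
    by_cases hdep : ∃ l : ℂ, f u = l • f u₀
    · obtain ⟨l, hl⟩ := hdep
      have hz : f (u - l • u₀) = 0 := by
        simp [map_sub, _root_.map_smul, hl]
      obtain ⟨c, hc⟩ := H (u - l • u₀)
      rw [hz, smul_zero, map_sub, _root_.map_smul, sub_eq_zero] at hc
      rw [hc, hc₀, hl, smul_comm]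
    · push_neg at hdep
      obtain ⟨c, hc⟩ := H u
      obtain ⟨c', hc'⟩ := H (u + u₀)
      rw [map_add, map_add, hc, hc₀, smul_add] at hc'
      have hcc : (c - c') • f u = (c' - c₀) • f u₀ := by
        have := hc'
        rw [sub_smul, sub_smul]
        linear_combination (norm := module) this
      by_cases hccz : c = c'
      · rw [hccz, sub_self, zero_smul] at hcc
        have : c' - c₀ = 0 := by
          rcases smul_eq_zero.mp hcc.symm with h | h
          · exact h
          · exact absurd h hu₀
        rw [hc, hccz, sub_eq_zero.mp this]
      · exfalso
        apply hdep ((c - c')⁻¹ * (c' - c₀))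
        rw [← smul_smul, ← hcc, smul_smul, inv_mul_cancel₀ (sub_ne_zero.mpr hccz), one_smul]
  · push_neg at hf
    refine ⟨0, fun u => ?_⟩
    obtain ⟨c, hc⟩ := H u
    rw [hc, hf u, smul_zero, smul_zero]

theorem stmt2 {n : ℕ} (hn : 2 ≤ n) (A B : Matrix (Fin n) (Fin n) ℂ) :
    Submodule.span ℂ {A} = Submodule.span ℂ {B} ↔
      ∀ x y : Fin n → ℂ, x ≠ 0 → y ≠ 0 →
        (dotProduct (star x) (A.mulVec y) = 0 ↔
          dotProduct (star x) (B.mulVec y) = 0) := by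
  constructor
  · intro hspan x y hx hy
    have hA : A ∈ Submodule.span ℂ {B} := hspan ▸ Submodule.mem_span_singleton_self A
    have hB : B ∈ Submodule.span ℂ {A} := hspan.symm ▸ Submodule.mem_span_singleton_self B
    obtain ⟨a, ha⟩ := Submodule.mem_span_singleton.mp hA
    obtain ⟨b, hb⟩ := Submodule.mem_span_singleton.mp hB
    constructor
    · intro h
      rw [← hb, smul_mulVec, dotProduct_smul, smul_eq_mul, h, mul_zero]
    · intro h
      rw [← ha, smul_mulVec, dotProduct_smul, smul_eq_mul, h, mul_zero]
  · intro h
    -- key: for every u, the rows u ᵥ* B and u ᵥ* A are proportional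
    have key : ∀ (M N : Matrix (Fin n) (Fin n) ℂ),
        (∀ x y : Fin n → ℂ, x ≠ 0 → y ≠ 0 →
          (dotProduct (star x) (M.mulVec y) = 0 ↔
            dotProduct (star x) (N.mulVec y) = 0)) →
        ∃ c : ℂ, N = c • M := by
      intro M N hMN
      have Hrow : ∀ u : Fin n → ℂ, ∃ c : ℂ, N.vecMulLinear u = c • M.vecMulLinear u := by
        intro u
        by_cases hu : u = 0
        · exact ⟨0, by simp [hu]⟩
        · have hiff : ∀ y : Fin n → ℂ, (u ᵥ* M) ⬝ᵥ y = 0 ↔ (u ᵥ* N) ⬝ᵥ y = 0 := by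
            intro y
            by_cases hy : y = 0
            · simp [hy]
            · have hx : star u ≠ 0 := fun hs => hu (by simpa using congrArg star hs)
              have := hMN (star u) y hx hy
              simpa [Matrix.dotProduct_mulVec, star_star] using this
          obtain ⟨c, hc⟩ := functional_prop (u ᵥ* M) (u ᵥ* N) hiff
          exact ⟨c, by simpa using hc⟩
      obtain ⟨c, hc⟩ := pencil_prop M.vecMulLinear N.vecMulLinear Hrow
      refine ⟨c, ?_⟩
      ext i j
      have := congrFun (hc (Pi.single i 1)) j
      simpa [Matrix.single_vecMul] using this
    obtain ⟨b, hb⟩ := key A B h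
    obtain ⟨a, ha⟩ := key B A (fun x y hx hy => (h x y hx hy).symm)
    apply le_antisymm
    · rw [Submodule.span_le, Set.singleton_subset_iff, SetLike.mem_coe,
        Submodule.mem_span_singleton]
      exact ⟨a, ha.symm⟩
    · rw [Submodule.span_le, Set.singleton_subset_iff, SetLike.mem_coe,
        Submodule.mem_span_singleton]
      exact ⟨b, hb.symm⟩
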